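/- (Finsler step, Section 2.2: passing from the KYP certificate to the performance LMI). Let (A, B, C, D) be system matrices (A ∈ ℝ^{n×n}, B ∈ ℝ^{n×nw}, C ∈ ℝ^{nz×n}, D ∈ ℝ^{nz×nw}), let (A_Ψ, B_Ψ, C_Ψ, D_Ψ) be filter matrices with nz+nw inputs and q outputs, M = Mᵀ ∈ ℝ^{q×q}, and let (𝒜, ℬ, 𝒞, 𝒟) be the combined realization. If 𝒳 = 𝒳ᵀ satisfies KYP(𝒳, M; 𝒜, ℬ, 𝒞, 𝒟) ≺ 0, then there exists γ > 0 such that KYP(𝒳, diag(M, γ⁻¹ I_{nz}, −γ I_{nz}); 𝒜, ℬ', 𝒞', 𝒟') ≺ 0, where, with E := [I_{nz}; 0_{nw×nz}], ℬ' := [[B_Ψ D_F, B_Ψ E],[B, 0_{n×nz}]], 𝒞' := [[C_Ψ, D_Ψ C_F],[0_{nz×k}, C],[0_{nz×k}, 0_{nz×n}]], and 𝒟' := [[D_Ψ D_F, D_Ψ E],[D, I_{nz}],[0_{nz×nw}, I_{nz}]]. -/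

import Mathlib

set_option maxHeartbeats 1000000


open MeasureTheory Matrix

noncomputable section

namespace IQCPaper

/-- Membership in `L2e^p`: measurable and square integrable on every bounded interval. -/
def MemL2e (p : ℕ) (f : ℝ → Fin p → ℝ) : Prop :=
  Measurable f ∧ ∀ T : ℝ, 0 < T → IntegrableOn (fun t => ‖f t‖ ^ 2) (Set.Ioc 0 T) volume

/-- Membership in `L2^p`. -/
def MemL2 (p : ℕ) (f : ℝ → Fin p → ℝ) : Prop :=
  MemL2e p f ∧ IntegrableOn (fun t => ‖f t‖ ^ 2) (Set.Ioi 0) volume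

/-- The `L2` norm on `[0,∞)`. -/
def L2norm (p : ℕ) (f : ℝ → Fin p → ℝ) : ℝ :=
  Real.sqrt (∫ t in Set.Ioi (0 : ℝ), ‖f t‖ ^ 2)

/-- The filter trajectory: absolutely continuous solution of
`ξ' = A ξ + B u`, `ξ(0) = 0`, written in integral form. -/
def IsFilterTraj {k m : Type*} [Fintype k] [Fintype m]
    (A : Matrix k k ℝ) (B : Matrix k m ℝ)
    (u : ℝ → m → ℝ) (ξ : ℝ → k → ℝ) : Prop :=
  Continuous ξ ∧ ξ 0 = 0 ∧
    ∀ t : ℝ, 0 ≤ t → ξ t = ∫ s in (0 : ℝ)..t, (A.mulVec (ξ s) + B.mulVec (u s))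

/-- The KYP matrix. -/
def KYP {n m q : Type*} [Fintype n] [Fintype m] [Fintype q]
    (X : Matrix n n ℝ) (M : Matrix q q ℝ)
    (A : Matrix n n ℝ) (B : Matrix n m ℝ)
    (C : Matrix q n ℝ) (D : Matrix q m ℝ) : Matrix (n ⊕ m) (n ⊕ m) ℝ :=
  fromBlocks (Aᵀ * X + X * A + Cᵀ * M * C) (X * B + Cᵀ * M * D)
    (Bᵀ * X + Dᵀ * M * C) (Dᵀ * M * D)

/-- A real square matrix is Hurwitz if all its complex eigenvalues have negative real part. -/
def IsHurwitz {n : Type*} [Fintype n] [DecidableEq n] (A : Matrix n n ℝ) : Prop :=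
  ∀ μ ∈ spectrum ℂ (A.map Complex.ofReal), μ.re < 0

/-- Finite-horizon IQC with terminal cost matrix `Z`. -/
def FiniteHorizonIQC {k q : Type*} [Fintype k] [Fintype q] (nz nw : ℕ)
    (AΨ : Matrix k k ℝ) (BΨ : Matrix k (Fin nz ⊕ Fin nw) ℝ)
    (CΨ : Matrix q k ℝ) (DΨ : Matrix q (Fin nz ⊕ Fin nw) ℝ)
    (M : Matrix q q ℝ) (Z : Matrix k k ℝ)
    (Δ : (ℝ → Fin nz → ℝ) → (ℝ → Fin nw → ℝ)) : Prop :=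
  ∀ z : ℝ → Fin nz → ℝ, MemL2e nz z →
    ∀ ξ : ℝ → k → ℝ,
      IsFilterTraj AΨ BΨ (fun t => Sum.elim (z t) (Δ z t)) ξ →
      ∀ T : ℝ, 0 < T →
        0 ≤ (∫ t in (0 : ℝ)..T,
              (CΨ.mulVec (ξ t) + DΨ.mulVec (Sum.elim (z t) (Δ z t))) ⬝ᵥ
                M.mulVec (CΨ.mulVec (ξ t) + DΨ.mulVec (Sum.elim (z t) (Δ z t))))
            + (ξ T) ⬝ᵥ Z.mulVec (ξ T)

/-- Factorization identities for `(Z̃, M̃, C̃, D̃)`. -/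
def FactIds {k m q : Type*} [Fintype k] [Fintype m] [Fintype q]
    (AΨ : Matrix k k ℝ) (BΨ : Matrix k m ℝ) (CΨ : Matrix q k ℝ) (DΨ : Matrix q m ℝ)
    (M : Matrix q q ℝ) (Z' : Matrix k k ℝ) (M' : Matrix m m ℝ)
    (C' : Matrix m k ℝ) (D' : Matrix m m ℝ) : Prop :=
  Z'.IsSymm ∧ M'.IsSymm ∧
    AΨᵀ * Z' + Z' * AΨ + CΨᵀ * M * CΨ = C'ᵀ * M' * C' ∧
    Z' * BΨ + CΨᵀ * M * DΨ = C'ᵀ * M' * D' ∧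
    DΨᵀ * M * DΨ = D'ᵀ * M' * D'

/-- `(Z̃, M̃, C̃, D̃)` certifies a canonical factorization of `(AΨ, BΨ, CΨ, DΨ, M)`. -/
def CertifiesCanonical {k m q : Type*} [Fintype k] [Fintype m] [Fintype q]
    [DecidableEq k] [DecidableEq m]
    (AΨ : Matrix k k ℝ) (BΨ : Matrix k m ℝ) (CΨ : Matrix q k ℝ) (DΨ : Matrix q m ℝ)
    (M : Matrix q q ℝ) (Z' : Matrix k k ℝ) (M' : Matrix m m ℝ)
    (C' : Matrix m k ℝ) (D' : Matrix m m ℝ) : Prop :=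
  FactIds AΨ BΨ CΨ DΨ M Z' M' C' D' ∧ IsUnit D' ∧ IsHurwitz (AΨ - BΨ * D'⁻¹ * C')

/-- A causal operator. -/
def Causal (nz nw : ℕ) (Δ : (ℝ → Fin nz → ℝ) → (ℝ → Fin nw → ℝ)) : Prop :=
  ∀ z z' : ℝ → Fin nz → ℝ, ∀ T : ℝ, 0 < T →
    (∀ᵐ t ∂(volume.restrict (Set.Icc (0 : ℝ) T)), z t = z' t) →
    (∀ᵐ t ∂(volume.restrict (Set.Icc (0 : ℝ) T)), Δ z t = Δ z' t)

/-- A bounded operator from `L2^{nz}` to `L2^{nw}`. -/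
def BoundedOp (nz nw : ℕ) (Δ : (ℝ → Fin nz → ℝ) → (ℝ → Fin nw → ℝ)) : Prop :=
  ∃ c : ℝ, 0 ≤ c ∧ ∀ z, MemL2 nz z → MemL2 nw (Δ z) ∧ L2norm nw (Δ z) ≤ c * L2norm nz z



section FinslerHelpers

lemma dot_self_nonneg {ι : Type*} [Fintype ι] (v : ι → ℝ) : 0 ≤ v ⬝ᵥ v :=
  Finset.sum_nonneg fun i _ => mul_self_nonneg _

lemma add_dot_self_le {ι : Type*} [Fintype ι] (p q : ι → ℝ) :
    (p + q) ⬝ᵥ (p + q) ≤ 2 * (p ⬝ᵥ p) + 2 * (q ⬝ᵥ q) := by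
  simp only [dotProduct, Pi.add_apply, Finset.mul_sum, ← Finset.sum_add_distrib]
  refine Finset.sum_le_sum fun i _ => ?_
  nlinarith [sq_nonneg (p i - q i)]

lemma dot_self_pos {ι : Type*} [Fintype ι] {v : ι → ℝ} (hv : v ≠ 0) : 0 < v ⬝ᵥ v := by
  rcases (dot_self_nonneg v).lt_or_eq with h1 | h1
  · exact h1
  · exfalso; apply hv
    ext i
    by_contra hvi
    have h2 : 0 < v i * v i := mul_self_pos.2 (by simpa using hvi)
    have h3 : v ⬝ᵥ v > 0 := by
      rw [dotProduct]
      exact Finset.sum_pos' (fun j _ => mul_self_nonneg _) ⟨i, Finset.mem_univ i, h2⟩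
    linarith



lemma dot_le {ι : Type*} [Fintype ι] (δ : ℝ) (hδ : 0 < δ) (p q : ι → ℝ) :
    p ⬝ᵥ q ≤ (δ * (p ⬝ᵥ p) + δ⁻¹ * (q ⬝ᵥ q)) / 2 := by
  have : (δ * (p ⬝ᵥ p) + δ⁻¹ * (q ⬝ᵥ q)) / 2
      = ∑ i, (δ * (p i * p i) + δ⁻¹ * (q i * q i)) / 2 := by
    rw [dotProduct, dotProduct, Finset.mul_sum, Finset.mul_sum, ← Finset.sum_add_distrib,
        Finset.sum_div]
  rw [this, dotProduct]
  refine Finset.sum_le_sum fun i _ => ?_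
  have h1 : 0 < δ⁻¹ := inv_pos.2 hδ
  have h2 : δ * δ⁻¹ = 1 := mul_inv_cancel₀ hδ.ne'
  nlinarith [sq_nonneg (δ * p i - q i), mul_pos hδ h1]

lemma mulVec_sq_bound {ι κ : Type*} [Fintype ι] [Fintype κ] (N : Matrix κ ι ℝ) :
    ∃ c : ℝ, 0 ≤ c ∧ ∀ v : ι → ℝ, (N *ᵥ v) ⬝ᵥ (N *ᵥ v) ≤ c * (v ⬝ᵥ v) := by
  refine ⟨∑ i : κ, ∑ j : ι, (N i j) ^ 2, by positivity, fun v => ?_⟩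
  have hv : v ⬝ᵥ v = ∑ j : ι, (v j) ^ 2 := by simp [dotProduct, sq]
  rw [hv, Finset.sum_mul]
  simp only [dotProduct, mulVec, dotProduct]
  refine Finset.sum_le_sum fun i _ => ?_
  have h := Finset.sum_mul_sq_le_sq_mul_sq Finset.univ (fun j => N i j) v
  calc (∑ j, N i j * v j) * (∑ j, N i j * v j) = (∑ j, N i j * v j)^2 := by ring
    _ ≤ (∑ j, (N i j)^2) * ∑ j, (v j)^2 := h

lemma posDef_coercive {ι : Type*} [Fintype ι] {M : Matrix ι ι ℝ} (hM : M.PosDef) :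
    ∃ ε : ℝ, 0 < ε ∧ ∀ v : ι → ℝ, ε * (v ⬝ᵥ v) ≤ v ⬝ᵥ (M *ᵥ v) := by
  cases isEmpty_or_nonempty ι with
  | inl h =>
      refine ⟨1, one_pos, fun v => ?_⟩
      simp [dotProduct]
  | inr h =>
      classical
      set K : Set (ι → ℝ) := {v | v ⬝ᵥ v = 1} with hK
      have hcont : Continuous fun v : ι → ℝ => v ⬝ᵥ (M *ᵥ v) := by
        unfold dotProduct mulVec dotProduct
        exact continuous_finset_sum _ fun i _ => (continuous_apply i).mul
          (continuous_finset_sum _ fun j _ => continuous_const.mul (continuous_apply j))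
      have hcont2 : Continuous fun v : ι → ℝ => v ⬝ᵥ v := by
        unfold dotProduct
        exact continuous_finset_sum _ fun i _ => (continuous_apply i).mul (continuous_apply i)
      have hKc : IsClosed K := isClosed_eq hcont2 continuous_const
      have hKb : Bornology.IsBounded K := by
        refine (Metric.isBounded_iff_subset_closedBall 0).2 ⟨1, fun v hv => ?_⟩
        simp only [Metric.mem_closedBall, dist_zero_right]
        rw [pi_norm_le_iff_of_nonneg zero_le_one]
        intro i
        have h1 : (v i) * (v i) ≤ v ⬝ᵥ v := by
          rw [dotProduct]
          exact Finset.single_le_sum (fun j _ => mul_self_nonneg (v j)) (Finset.mem_univ i)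
        rw [hv] at h1
        rw [Real.norm_eq_abs, abs_le]
        constructor <;> nlinarith
      have hcompact : IsCompact K := Metric.isCompact_of_isClosed_isBounded hKc hKb
      have hne : K.Nonempty := by
        obtain ⟨i₀⟩ := h
        refine ⟨fun j => if j = i₀ then 1 else 0, ?_⟩
        simp [hK, dotProduct, Finset.sum_ite_eq', ite_mul]
      obtain ⟨v₀, hv₀K, hmin⟩ := hcompact.exists_isMinOn hne hcont.continuousOn
      have hv₀min : ∀ u ∈ K, v₀ ⬝ᵥ (M *ᵥ v₀) ≤ u ⬝ᵥ (M *ᵥ u) := fun u hu =>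
        isMinOn_iff.1 hmin u hu
      have hv₀ne : v₀ ≠ 0 := by
        intro h0
        rw [h0] at hv₀K
        simp [hK, dotProduct] at hv₀K
      have hε : 0 < v₀ ⬝ᵥ (M *ᵥ v₀) := by
        have := (posDef_iff_dotProduct_mulVec.1 hM).2 hv₀ne
        simpa using this
      refine ⟨v₀ ⬝ᵥ (M *ᵥ v₀), hε, fun v => ?_⟩
      rcases eq_or_ne v 0 with rfl | hv
      · simp
      · have ht : 0 < v ⬝ᵥ v := by
          rcases (dot_self_nonneg v).lt_or_eq with h1 | h1
          · exact h1
          · exfalso; apply hv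
            ext i
            by_contra hvi
            have h2 : 0 < v i * v i := mul_self_pos.2 (by simpa using hvi)
            have h3 : v ⬝ᵥ v > 0 := by
              rw [dotProduct]
              exact Finset.sum_pos' (fun j _ => mul_self_nonneg _) ⟨i, Finset.mem_univ i, h2⟩
            linarith
        set t := v ⬝ᵥ v
        set u : ι → ℝ := (Real.sqrt t)⁻¹ • v with hu
        have hsq : Real.sqrt t * Real.sqrt t = t := Real.mul_self_sqrt ht.le
        have hsne : Real.sqrt t ≠ 0 := by positivity
        have huK : u ∈ K := by
          simp only [hK, Set.mem_setOf_eq, hu, smul_dotProduct, dotProduct_smul, smul_eq_mul]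
          field_simp
          exact (Real.sq_sqrt ht.le).symm
        have h1 := hv₀min u huK
        have h2 : u ⬝ᵥ (M *ᵥ u) = ((Real.sqrt t)⁻¹ * (Real.sqrt t)⁻¹) * (v ⬝ᵥ (M *ᵥ v)) := by
          rw [hu]
          rw [smul_dotProduct, mulVec_smul, dotProduct_smul]
          simp only [smul_eq_mul]
          ring
        have h3 : (Real.sqrt t)⁻¹ * (Real.sqrt t)⁻¹ = t⁻¹ := by
          rw [← mul_inv]; rw [hsq]
        rw [h2, h3] at h1
        have h4 := mul_le_mul_of_nonneg_left h1 ht.le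
        rw [← mul_assoc, mul_inv_cancel₀ ht.ne', one_mul] at h4
        linarith

lemma dot_transpose_mulVec {p r : Type*} [Fintype p] [Fintype r]
    (N : Matrix p r ℝ) (v : r → ℝ) (w : p → ℝ) :
    v ⬝ᵥ (Nᵀ *ᵥ w) = (N *ᵥ v) ⬝ᵥ w := by
  rw [dotProduct_mulVec, vecMul_transpose]

lemma kyp_qf {α β κ : Type*} [Fintype α] [Fintype β] [Fintype κ]
    (X : Matrix α α ℝ) (M : Matrix κ κ ℝ) (A : Matrix α α ℝ) (B : Matrix α β ℝ)
    (C : Matrix κ α ℝ) (D : Matrix κ β ℝ) (a : α → ℝ) (b : β → ℝ) :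
    Sum.elim a b ⬝ᵥ (KYP X M A B C D *ᵥ Sum.elim a b) =
      (A *ᵥ a + B *ᵥ b) ⬝ᵥ (X *ᵥ a) + a ⬝ᵥ (X *ᵥ (A *ᵥ a + B *ᵥ b))
        + (C *ᵥ a + D *ᵥ b) ⬝ᵥ (M *ᵥ (C *ᵥ a + D *ᵥ b)) := by
  simp only [KYP, fromBlocks_mulVec, sumElim_dotProduct_sumElim, add_mulVec,
    ← mulVec_mulVec, dotProduct_add, add_dotProduct, mulVec_add,
    dot_transpose_mulVec, Sum.elim_comp_inl, Sum.elim_comp_inr]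
  ring

lemma kyp_isSymm {α β κ : Type*} [Fintype α] [Fintype β] [Fintype κ]
    {X : Matrix α α ℝ} {M : Matrix κ κ ℝ} (A : Matrix α α ℝ) (B : Matrix α β ℝ)
    (C : Matrix κ α ℝ) (D : Matrix κ β ℝ) (hX : X.IsSymm) (hM : M.IsSymm) :
    (KYP X M A B C D).IsSymm := by
  have e11 : (Aᵀ * X + X * A + Cᵀ * M * C)ᵀ = Aᵀ * X + X * A + Cᵀ * M * C := by
    simp only [transpose_add, transpose_mul, transpose_transpose, hX.eq, hM.eq]
    simp only [Matrix.mul_assoc]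
    try abel
  have e12 : (X * B + Cᵀ * M * D)ᵀ = Bᵀ * X + Dᵀ * M * C := by
    simp only [transpose_add, transpose_mul, transpose_transpose, hX.eq, hM.eq]
    simp only [Matrix.mul_assoc]
    try abel
  have e21 : (Bᵀ * X + Dᵀ * M * C)ᵀ = X * B + Cᵀ * M * D := by
    simp only [transpose_add, transpose_mul, transpose_transpose, hX.eq, hM.eq]
    simp only [Matrix.mul_assoc]
    try abel
  have e22 : (Dᵀ * M * D)ᵀ = Dᵀ * M * D := by
    simp only [transpose_mul, transpose_transpose, hM.eq]
    simp only [Matrix.mul_assoc]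
    try abel
  unfold Matrix.IsSymm
  rw [KYP, fromBlocks_transpose, e11, e12, e21, e22]

lemma isHermitian_of_isSymm {ι : Type*} [Fintype ι] {M : Matrix ι ι ℝ} (h : M.IsSymm) :
    M.IsHermitian := by
  have : Mᴴ = Mᵀ := by ext i j; simp [conjTranspose_apply]
  rw [Matrix.IsHermitian, this]
  exact h

lemma elim_add {α β : Type*} (f g : α → ℝ) (h i : β → ℝ) :
    Sum.elim f h + Sum.elim g i = Sum.elim (f + g) (h + i) := by
  funext x
  rcases x with x | x <;> simp


lemma finsler_aux {α ι W Z : Type*} [Fintype α] [Fintype ι] [Fintype W] [Fintype Z]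
    [DecidableEq Z]
    {𝒳 : Matrix α α ℝ} (hX : 𝒳.IsSymm) {M : Matrix ι ι ℝ} (hM : M.IsSymm)
    (𝓐 : Matrix α α ℝ) (ℬ : Matrix α W ℝ) (ℬ₂ : Matrix α Z ℝ)
    (𝓒 : Matrix ι α ℝ) (𝓓 : Matrix ι W ℝ) (𝓓₂ : Matrix ι Z ℝ)
    (C₂ : Matrix Z α ℝ) (Dp : Matrix Z W ℝ)
    (hKYP : (-(KYP 𝒳 M 𝓐 ℬ 𝓒 𝓓)).PosDef) :
    ∃ γ : ℝ, 0 < γ ∧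
      (-(KYP 𝒳 (fromBlocks M 0 0 (fromBlocks (γ⁻¹ • (1 : Matrix Z Z ℝ)) 0 0
          (-γ • (1 : Matrix Z Z ℝ))))
        𝓐 (fromCols ℬ ℬ₂)
        (fromRows 𝓒 (fromRows C₂ 0))
        (fromRows (fromCols 𝓓 𝓓₂)
          (fromRows (fromCols Dp 1) (fromCols 0 1))))).PosDef := by
  classical
  obtain ⟨ε, hε, hco⟩ := posDef_coercive hKYP
  obtain ⟨cX, hcX0, hcX⟩ := mulVec_sq_bound 𝒳
  obtain ⟨cB2, hcB20, hcB2⟩ := mulVec_sq_bound ℬ₂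
  obtain ⟨cM, hcM0, hcM⟩ := mulVec_sq_bound M
  obtain ⟨cC, hcC0, hcC⟩ := mulVec_sq_bound 𝓒
  obtain ⟨cD, hcD0, hcD⟩ := mulVec_sq_bound 𝓓
  obtain ⟨cD2, hcD20, hcD2⟩ := mulVec_sq_bound 𝓓₂
  obtain ⟨cC2, hcC20, hcC2⟩ := mulVec_sq_bound C₂
  obtain ⟨cDp, hcDp0, hcDp⟩ := mulVec_sq_bound Dp
  -- helper for coefficient bounds
  have coefbound : ∀ c : ℝ, 0 ≤ c → (4 * (c + 1) / ε)⁻¹ * c ≤ ε / 4 := by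
    intro c hc
    rw [inv_div, div_mul_eq_mul_div, div_le_div_iff₀ (by positivity) (by norm_num)]
    nlinarith
  obtain ⟨δ1, hδ1def⟩ : ∃ y : ℝ, y = 4 * (cX + 1) / ε := ⟨_, rfl⟩
  have hδ1 : 0 < δ1 := by rw [hδ1def]; positivity
  obtain ⟨K2, hK2def⟩ : ∃ y : ℝ, y = cM * (2 * cC + 2 * cD) := ⟨_, rfl⟩
  have hK20 : 0 ≤ K2 := by rw [hK2def]; positivity
  obtain ⟨δ2, hδ2def⟩ : ∃ y : ℝ, y = 4 * (K2 + 1) / ε := ⟨_, rfl⟩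
  have hδ2 : 0 < δ2 := by rw [hδ2def]; positivity
  obtain ⟨cz, hczdef⟩ : ∃ y : ℝ, y = 2 * cC2 + 4 * cDp + 4 := ⟨_, rfl⟩
  have hcz0 : 0 ≤ cz := by rw [hczdef]; positivity
  obtain ⟨c4, hc4def⟩ : ∃ y : ℝ, y = (cD2 + cM * cD2) / 2 := ⟨_, rfl⟩
  have hc40 : 0 ≤ c4 := by rw [hc4def]; positivity
  obtain ⟨γ, hγdef⟩ : ∃ y : ℝ, y = max (4 * (cz + 1) / ε) (δ1 * cB2 + δ2 * cD2 + c4 + cz + 1 + ε / 4) := ⟨_, rfl⟩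
  have hγ1 : 1 ≤ γ := by
    rw [hγdef]
    refine le_trans ?_ (le_max_right _ _)
    nlinarith [mul_nonneg hδ1.le hcB20, mul_nonneg hδ2.le hcD20]
  have hγ : 0 < γ := lt_of_lt_of_le one_pos hγ1
  have hγinv0 : 0 ≤ γ⁻¹ := inv_nonneg.2 hγ.le
  have hγinv1 : γ⁻¹ ≤ 1 := inv_le_one_of_one_le₀ hγ1
  have hγA : γ⁻¹ * cz ≤ ε / 4 := by
    have h41 : 4 * (cz + 1) / ε ≤ γ := hγdef ▸ le_max_left _ _
    rw [div_le_iff₀ hε] at h41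
    have h43 : γ⁻¹ * (4 * (cz + 1)) ≤ γ⁻¹ * (γ * ε) := by
      apply mul_le_mul_of_nonneg_left _ hγinv0
      linarith
    have h44 : γ⁻¹ * (γ * ε) = ε := by field_simp
    rw [h44] at h43
    nlinarith [hγinv0, hcz0]
  have hγB : δ1 * cB2 + δ2 * cD2 + c4 + cz + 1 + ε / 4 ≤ γ := hγdef ▸ le_max_right _ _
  refine ⟨γ, hγ, posDef_iff_dotProduct_mulVec.2 ⟨?_, ?_⟩⟩
  · -- Hermitian part
    refine Matrix.IsHermitian.neg (isHermitian_of_isSymm ?_)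
    apply kyp_isSymm _ _ _ _ hX
    unfold Matrix.IsSymm
    rw [fromBlocks_transpose, fromBlocks_transpose]
    simp [transpose_smul, hM.eq]
  · -- positivity part
    intro x hx
    have hstar : star x = x := by
      funext i; simp
    set a : α → ℝ := fun i => x (Sum.inl i) with ha
    set w : W → ℝ := fun i => x (Sum.inr (Sum.inl i)) with hw
    set s : Z → ℝ := fun i => x (Sum.inr (Sum.inr i)) with hs
    have hxe : x = Sum.elim a (Sum.elim w s) := by
      funext i
      rcases i with i | i
      · rfl
      · rcases i with i | i <;> rfl
    have hxx : 0 < a ⬝ᵥ a + (w ⬝ᵥ w + s ⬝ᵥ s) := by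
      have := dot_self_pos (v := Sum.elim a (Sum.elim w s)) (by rw [← hxe]; exact hx)
      rwa [sumElim_dotProduct_sumElim, sumElim_dotProduct_sumElim] at this
    rw [hstar, hxe, neg_mulVec, dotProduct_neg]
    rw [kyp_qf]
    -- rewrite the pieces
    rw [fromCols_mulVec_sumElim]
    have hCv : fromRows 𝓒 (fromRows C₂ (0 : Matrix Z α ℝ)) *ᵥ a
        = Sum.elim (𝓒 *ᵥ a) (Sum.elim (C₂ *ᵥ a) 0) := by
      rw [fromRows_mulVec, fromRows_mulVec, zero_mulVec]
    have hDv : fromRows (fromCols 𝓓 𝓓₂)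
          (fromRows (fromCols Dp (1 : Matrix Z Z ℝ)) (fromCols (0 : Matrix Z W ℝ) 1))
          *ᵥ Sum.elim w s
        = Sum.elim (𝓓 *ᵥ w + 𝓓₂ *ᵥ s) (Sum.elim (Dp *ᵥ w + s) s) := by
      rw [fromRows_mulVec, fromRows_mulVec, fromCols_mulVec_sumElim,
        fromCols_mulVec_sumElim, fromCols_mulVec_sumElim, one_mulVec, zero_mulVec,
        zero_add]
    rw [hCv, hDv, elim_add, elim_add]
    rw [zero_add]
    have hMz : ∀ (z₁ : ι → ℝ) (z₂ z₃ : Z → ℝ),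
        fromBlocks M 0 0 (fromBlocks (γ⁻¹ • (1 : Matrix Z Z ℝ)) 0 0
            (-γ • (1 : Matrix Z Z ℝ))) *ᵥ Sum.elim z₁ (Sum.elim z₂ z₃)
          = Sum.elim (M *ᵥ z₁) (Sum.elim (γ⁻¹ • z₂) (-γ • z₃)) := by
      intro z₁ z₂ z₃
      rw [fromBlocks_mulVec]
      simp only [Sum.elim_comp_inl, Sum.elim_comp_inr, zero_mulVec, add_zero, zero_add,
        fromBlocks_mulVec, smul_mulVec, one_mulVec]
    rw [hMz, sumElim_dotProduct_sumElim, sumElim_dotProduct_sumElim,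
      dotProduct_smul, dotProduct_smul, smul_eq_mul, smul_eq_mul]
    -- now the goal is a scalar inequality; reassociate
    have hassoc1 : 𝓐 *ᵥ a + (ℬ *ᵥ w + ℬ₂ *ᵥ s) = (𝓐 *ᵥ a + ℬ *ᵥ w) + ℬ₂ *ᵥ s :=
      (add_assoc _ _ _).symm
    have hassoc2 : 𝓒 *ᵥ a + (𝓓 *ᵥ w + 𝓓₂ *ᵥ s) = (𝓒 *ᵥ a + 𝓓 *ᵥ w) + 𝓓₂ *ᵥ s :=
      (add_assoc _ _ _).symm
    rw [hassoc1, hassoc2]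
    rw [add_dotProduct, mulVec_add, dotProduct_add, mulVec_add, dotProduct_add,
      add_dotProduct]
    -- symmetric cross terms
    have hT2 : a ⬝ᵥ (𝒳 *ᵥ (ℬ₂ *ᵥ s)) = (ℬ₂ *ᵥ s) ⬝ᵥ (𝒳 *ᵥ a) := by
      conv_lhs => rw [dotProduct_mulVec, ← hX.eq, vecMul_transpose]
      exact dotProduct_comm _ _
    have hsymM : ∀ u v : ι → ℝ, u ⬝ᵥ M *ᵥ v = v ⬝ᵥ M *ᵥ u := by
      intro u v
      conv_lhs => rw [dotProduct_mulVec, ← hM.eq, vecMul_transpose]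
      exact dotProduct_comm _ _
    rw [hT2]
    have hMexp : (𝓒 *ᵥ a + 𝓓 *ᵥ w + 𝓓₂ *ᵥ s) ⬝ᵥ M *ᵥ (𝓒 *ᵥ a + 𝓓 *ᵥ w + 𝓓₂ *ᵥ s)
        = (𝓒 *ᵥ a + 𝓓 *ᵥ w) ⬝ᵥ M *ᵥ (𝓒 *ᵥ a + 𝓓 *ᵥ w)
          + 2 * ((𝓓₂ *ᵥ s) ⬝ᵥ M *ᵥ (𝓒 *ᵥ a + 𝓓 *ᵥ w))
          + (𝓓₂ *ᵥ s) ⬝ᵥ M *ᵥ (𝓓₂ *ᵥ s) := by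
      have e1 := hsymM (𝓒 *ᵥ a) (𝓓₂ *ᵥ s)
      have e2 := hsymM (𝓓 *ᵥ w) (𝓓₂ *ᵥ s)
      simp only [mulVec_add, dotProduct_add, add_dotProduct]
      rw [e1, e2]
      ring
    rw [hMexp]
    -- old KYP bound
    have hold : 𝓐 *ᵥ a ⬝ᵥ 𝒳 *ᵥ a + ℬ *ᵥ w ⬝ᵥ 𝒳 *ᵥ a
        + (a ⬝ᵥ 𝒳 *ᵥ 𝓐 *ᵥ a + a ⬝ᵥ 𝒳 *ᵥ ℬ *ᵥ w)
        + (𝓒 *ᵥ a + 𝓓 *ᵥ w) ⬝ᵥ M *ᵥ (𝓒 *ᵥ a + 𝓓 *ᵥ w)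
        ≤ -ε * (a ⬝ᵥ a + w ⬝ᵥ w) := by
      have h1 := hco (Sum.elim a w)
      rw [neg_mulVec, dotProduct_neg, sumElim_dotProduct_sumElim] at h1
      have h2 := kyp_qf 𝒳 M 𝓐 ℬ 𝓒 𝓓 a w
      rw [add_dotProduct, mulVec_add, dotProduct_add] at h2
      linarith
    -- cross term 1 : (ℬ₂ s) ⬝ (𝒳 a), appears twice
    have hcr1 : (ℬ₂ *ᵥ s) ⬝ᵥ (𝒳 *ᵥ a)
        ≤ (δ1 * (cB2 * (s ⬝ᵥ s)) + (ε / 4) * (a ⬝ᵥ a)) / 2 := by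
      have h1 := dot_le δ1 hδ1 (ℬ₂ *ᵥ s) (𝒳 *ᵥ a)
      have h2 := mul_le_mul_of_nonneg_left (hcB2 s) hδ1.le
      have h3 := mul_le_mul_of_nonneg_left (hcX a) (inv_nonneg.2 hδ1.le)
      have h0 : δ1⁻¹ * cX ≤ ε / 4 := by rw [hδ1def]; exact coefbound cX hcX0
      have h4 : δ1⁻¹ * (cX * (a ⬝ᵥ a)) ≤ (ε / 4) * (a ⬝ᵥ a) := by
        rw [← mul_assoc]
        exact mul_le_mul_of_nonneg_right h0 (dot_self_nonneg a)
      linarith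
    -- cross term 3 : (𝓓₂ s) ⬝ (M (𝓒 a + 𝓓 w)), appears twice
    have hGG : (𝓒 *ᵥ a + 𝓓 *ᵥ w) ⬝ᵥ (𝓒 *ᵥ a + 𝓓 *ᵥ w)
        ≤ 2 * (cC * (a ⬝ᵥ a)) + 2 * (cD * (w ⬝ᵥ w)) := by
      have h1 := add_dot_self_le (𝓒 *ᵥ a) (𝓓 *ᵥ w)
      have h2 := hcC a
      have h3 := hcD w
      linarith
    have hcr3 : (𝓓₂ *ᵥ s) ⬝ᵥ (M *ᵥ (𝓒 *ᵥ a + 𝓓 *ᵥ w))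
        ≤ (δ2 * (cD2 * (s ⬝ᵥ s)) + ((ε / 4) * (a ⬝ᵥ a) + (ε / 4) * (w ⬝ᵥ w))) / 2 := by
      have h1 := dot_le δ2 hδ2 (𝓓₂ *ᵥ s) (M *ᵥ (𝓒 *ᵥ a + 𝓓 *ᵥ w))
      have h2 := mul_le_mul_of_nonneg_left (hcD2 s) hδ2.le
      have h3 := hcM (𝓒 *ᵥ a + 𝓓 *ᵥ w)
      have h4 : (M *ᵥ (𝓒 *ᵥ a + 𝓓 *ᵥ w)) ⬝ᵥ (M *ᵥ (𝓒 *ᵥ a + 𝓓 *ᵥ w))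
          ≤ K2 * (a ⬝ᵥ a) + K2 * (w ⬝ᵥ w) := by
        have h5 := mul_le_mul_of_nonneg_left hGG hcM0
        have h6 : cM * (2 * (cC * (a ⬝ᵥ a)) + 2 * (cD * (w ⬝ᵥ w)))
            ≤ K2 * (a ⬝ᵥ a) + K2 * (w ⬝ᵥ w) := by
          rw [hK2def]
          nlinarith [mul_nonneg (mul_nonneg hcM0 hcD0) (dot_self_nonneg a),
            mul_nonneg (mul_nonneg hcM0 hcC0) (dot_self_nonneg w)]
        linarith
      have h7 := mul_le_mul_of_nonneg_left h4 (inv_nonneg.2 hδ2.le)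
      have h9 : δ2⁻¹ * K2 ≤ ε / 4 := by rw [hδ2def]; exact coefbound K2 hK20
      have h8 : δ2⁻¹ * (K2 * (a ⬝ᵥ a) + K2 * (w ⬝ᵥ w))
          ≤ (ε / 4) * (a ⬝ᵥ a) + (ε / 4) * (w ⬝ᵥ w) := by
        have h9a := mul_le_mul_of_nonneg_right h9 (dot_self_nonneg a)
        have h9b := mul_le_mul_of_nonneg_right h9 (dot_self_nonneg w)
        nlinarith
      linarith
    -- quadratic term in h
    have hcr4 : (𝓓₂ *ᵥ s) ⬝ᵥ (M *ᵥ (𝓓₂ *ᵥ s)) ≤ c4 * (s ⬝ᵥ s) := by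
      have h1 := dot_le 1 one_pos (𝓓₂ *ᵥ s) (M *ᵥ (𝓓₂ *ᵥ s))
      have h2 := hcD2 s
      have h3 := hcM (𝓓₂ *ᵥ s)
      rw [hc4def]
      simp only [one_mul, inv_one] at h1
      nlinarith [mul_le_mul_of_nonneg_left h2 hcM0]
    -- z₂ term
    have hz2 : (C₂ *ᵥ a + (Dp *ᵥ w + s)) ⬝ᵥ (C₂ *ᵥ a + (Dp *ᵥ w + s))
        ≤ cz * (a ⬝ᵥ a + w ⬝ᵥ w) + 4 * (s ⬝ᵥ s) := by
      have h1 := add_dot_self_le (C₂ *ᵥ a) (Dp *ᵥ w + s)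
      have h2 := add_dot_self_le (Dp *ᵥ w) s
      have h3 := hcC2 a
      have h4 := hcDp w
      rw [hczdef]
      nlinarith [dot_self_nonneg a, dot_self_nonneg w, dot_self_nonneg s,
        mul_nonneg hcC20 (dot_self_nonneg w), mul_nonneg hcDp0 (dot_self_nonneg a)]
    have hz2' : γ⁻¹ * ((C₂ *ᵥ a + (Dp *ᵥ w + s)) ⬝ᵥ (C₂ *ᵥ a + (Dp *ᵥ w + s)))
        ≤ (ε / 4) * (a ⬝ᵥ a + w ⬝ᵥ w) + cz * (s ⬝ᵥ s) := by
      have h1 := mul_le_mul_of_nonneg_left hz2 hγinv0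
      have h2 : γ⁻¹ * (cz * (a ⬝ᵥ a + w ⬝ᵥ w)) ≤ (ε / 4) * (a ⬝ᵥ a + w ⬝ᵥ w) := by
        rw [← mul_assoc]
        apply mul_le_mul_of_nonneg_right hγA
        have := dot_self_nonneg a; have := dot_self_nonneg w; linarith
      have h3 : γ⁻¹ * (4 * (s ⬝ᵥ s)) ≤ cz * (s ⬝ᵥ s) := by
        have h5 : γ⁻¹ * 4 ≤ cz := by
          rw [hczdef]
          nlinarith [mul_nonneg hγinv0 (by norm_num : (0:ℝ) ≤ 4)]
        rw [← mul_assoc]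
        exact mul_le_mul_of_nonneg_right h5 (dot_self_nonneg s)
      calc γ⁻¹ * _ ≤ γ⁻¹ * (cz * (a ⬝ᵥ a + w ⬝ᵥ w) + 4 * (s ⬝ᵥ s)) := h1
        _ = γ⁻¹ * (cz * (a ⬝ᵥ a + w ⬝ᵥ w)) + γ⁻¹ * (4 * (s ⬝ᵥ s)) := by ring
        _ ≤ (ε / 4) * (a ⬝ᵥ a + w ⬝ᵥ w) + cz * (s ⬝ᵥ s) := by linarith
    -- final assembly
    rw [neg_pos]
    have hssnn := dot_self_nonneg s
    have haann := dot_self_nonneg a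
    have hwwnn := dot_self_nonneg w
    have hγBs := mul_le_mul_of_nonneg_right hγB hssnn
    have hεP := mul_pos hε hxx
    linarith [hold, hcr1, hcr3, hcr4, hz2', hγBs, hεP, hssnn, haann, hwwnn,
      mul_nonneg hε.le hssnn, mul_nonneg hε.le haann, mul_nonneg hε.le hwwnn]


end FinslerHelpers

/-- Finsler step (Section 2.2): passing from the KYP certificate to the performance LMI. -/
theorem finsler_step
    {n nw nz k q : ℕ}
    (A : Matrix (Fin n) (Fin n) ℝ) (B : Matrix (Fin n) (Fin nw) ℝ)
    (C : Matrix (Fin nz) (Fin n) ℝ) (D : Matrix (Fin nz) (Fin nw) ℝ)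
    (AΨ : Matrix (Fin k) (Fin k) ℝ) (BΨ : Matrix (Fin k) (Fin nz ⊕ Fin nw) ℝ)
    (CΨ : Matrix (Fin q) (Fin k) ℝ) (DΨ : Matrix (Fin q) (Fin nz ⊕ Fin nw) ℝ)
    (M : Matrix (Fin q) (Fin q) ℝ) (hM : M.IsSymm)
    (𝒳 : Matrix (Fin k ⊕ Fin n) (Fin k ⊕ Fin n) ℝ) (h𝒳 : 𝒳.IsSymm)
    (hKYP : (-(KYP 𝒳 M
        (fromBlocks AΨ (BΨ * fromRows C 0) 0 A)
        (fromRows (BΨ * fromRows D 1) B)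
        (fromCols CΨ (DΨ * fromRows C 0))
        (DΨ * fromRows D 1))).PosDef) :
    ∃ γ : ℝ, 0 < γ ∧
      (-(KYP 𝒳
          (fromBlocks M 0 0
            (fromBlocks (γ⁻¹ • (1 : Matrix (Fin nz) (Fin nz) ℝ)) 0 0
              (-γ • (1 : Matrix (Fin nz) (Fin nz) ℝ))))
          (fromBlocks AΨ (BΨ * fromRows C 0) 0 A)
          (fromBlocks (BΨ * fromRows D 1)
            (BΨ * fromRows (1 : Matrix (Fin nz) (Fin nz) ℝ)
              (0 : Matrix (Fin nw) (Fin nz) ℝ)) B 0)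
          (fromRows (fromCols CΨ (DΨ * fromRows C 0))
            (fromRows (fromCols 0 C) 0))
          (fromRows
            (fromCols (DΨ * fromRows D 1)
              (DΨ * fromRows (1 : Matrix (Fin nz) (Fin nz) ℝ)
                (0 : Matrix (Fin nw) (Fin nz) ℝ)))
            (fromRows (fromCols D 1) (fromCols 0 1))))).PosDef := by
  obtain ⟨γ, hγ, hpd⟩ := finsler_aux h𝒳 hM
    (fromBlocks AΨ (BΨ * fromRows C 0) 0 A)
    (fromRows (BΨ * fromRows D 1) B)
    (fromRows (BΨ * fromRows (1 : Matrix (Fin nz) (Fin nz) ℝ)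
      (0 : Matrix (Fin nw) (Fin nz) ℝ)) 0)
    (fromCols CΨ (DΨ * fromRows C 0)) (DΨ * fromRows D 1)
    (DΨ * fromRows (1 : Matrix (Fin nz) (Fin nz) ℝ) (0 : Matrix (Fin nw) (Fin nz) ℝ))
    (fromCols 0 C) D hKYP
  refine ⟨γ, hγ, ?_⟩
  rwa [fromCols_fromRows_eq_fromBlocks] at hpd

end IQCPaper
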